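/- Let D be a nice probability measure on ℝ² and let Δ and Δ* be triangulations of ℝ². If every triangle t* ∈ Δ* has its interior intersecting the interiors of at most c triangles of Δ (with c ≥ 1), then H(Δ) ≤ H(Δ*) + log₂ c. -/

import Mathlib

open MeasureTheory

/-- A closed halfplane in the plane (possibly degenerate when `(a,b) = (0,0)`). -/
def halfplane (a b c : ℝ) : Set (ℝ × ℝ) := {p | a * p.1 + b * p.2 ≤ c}

/-- A triangle: the intersection of at most 3 closed halfplanes
(taking a degenerate halfplane equal to the whole plane covers "fewer than 3"). -/
def IsTriangle (t : Set (ℝ × ℝ)) : Prop :=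
  ∃ a b c : Fin 3 → ℝ, t = ⋂ i, halfplane (a i) (b i) (c i)

/-- A triangulation of the plane: a finite set of triangles with pairwise
disjoint interiors whose union is all of `ℝ²`. -/
structure IsTriangulation (Δ : Finset (Set (ℝ × ℝ))) : Prop where
  tri : ∀ t ∈ Δ, IsTriangle t
  disj : ∀ t ∈ Δ, ∀ s ∈ Δ, t ≠ s → interior t ∩ interior s = ∅
  cover : ⋃₀ (Δ : Set (Set (ℝ × ℝ))) = Set.univ

/-- The function `x ↦ x·log₂(1/x)`; note that in Lean `0 * logb 2 (1/0) = 0`,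
matching the convention `0·log₂(1/0) = 0`. -/
noncomputable def ent (x : ℝ) : ℝ := x * Real.logb 2 (1 / x)

/-- The entropy `H(S) = Σ_{s ∈ S} D(s)·log₂(1/D(s))` of a finite family of sets. -/
noncomputable def Hent (μ : Measure (ℝ × ℝ)) (S : Finset (Set (ℝ × ℝ))) : ℝ :=
  ∑ s ∈ S, ent (μ s).toReal

lemma halfplane_convex (a b c : ℝ) : Convex ℝ (halfplane a b c) := by
  have : IsLinearMap ℝ (fun p : ℝ × ℝ => a * p.1 + b * p.2) := by
    constructor
    · intro p q; simp; ring
    · intro r p; simp; ring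
  exact convex_halfSpace_le this c

lemma halfplane_closed (a b c : ℝ) : IsClosed (halfplane a b c) :=
  isClosed_le (by fun_prop) continuous_const

lemma IsTriangle.convex {t : Set (ℝ × ℝ)} (h : IsTriangle t) : Convex ℝ t := by
  obtain ⟨a, b, c, rfl⟩ := h
  exact convex_iInter fun i => halfplane_convex _ _ _

lemma IsTriangle.closed {t : Set (ℝ × ℝ)} (h : IsTriangle t) : IsClosed t := by
  obtain ⟨a, b, c, rfl⟩ := h
  exact isClosed_iInter fun i => halfplane_closed _ _ _

lemma null_frontier {μ : Measure (ℝ × ℝ)} (hnice : μ ≪ volume)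
    {t : Set (ℝ × ℝ)} (ht : Convex ℝ t) : μ (frontier t) = 0 :=
  hnice (ht.addHaar_frontier volume)

lemma null_of_empty_interior {μ : Measure (ℝ × ℝ)} (hnice : μ ≪ volume)
    {t : Set (ℝ × ℝ)} (ht : Convex ℝ t) (h : interior t = ∅) : μ t = 0 := by
  have h1 : t ⊆ frontier t := by
    rw [frontier, h, Set.diff_empty]
    exact subset_closure
  exact measure_mono_null h1 (null_frontier hnice ht)

lemma measure_eq_interior {μ : Measure (ℝ × ℝ)} (hnice : μ ≪ volume)
    {t : Set (ℝ × ℝ)} (ht : Convex ℝ t) (A : Set (ℝ × ℝ)) :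
    μ (t ∩ A) = μ (interior t ∩ A) := by
  apply le_antisymm
  · calc μ (t ∩ A) ≤ μ ((interior t ∩ A) ∪ frontier t) := by
          apply measure_mono
          intro p hp
          by_cases hi : p ∈ interior t
          · exact Or.inl ⟨hi, hp.2⟩
          · exact Or.inr ⟨subset_closure hp.1, hi⟩
      _ ≤ μ (interior t ∩ A) + μ (frontier t) := measure_union_le _ _
      _ = μ (interior t ∩ A) := by rw [null_frontier hnice ht, add_zero]
  · exact measure_mono (Set.inter_subset_inter_left A interior_subset)

/-- Key partition lemma: for a triangulation, the measures of the pieces `t ∩ A` sum to `μ A`. -/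
lemma sum_inter {μ : Measure (ℝ × ℝ)} [IsProbabilityMeasure μ] (hnice : μ ≪ volume)
    {Δ : Finset (Set (ℝ × ℝ))} (hΔ : IsTriangulation Δ)
    (A : Set (ℝ × ℝ)) (hA : MeasurableSet A) :
    ∑ t ∈ Δ, μ (t ∩ A) = μ A := by
  apply le_antisymm
  · -- ≤ : replace by interiors, which are disjoint
    have h1 : ∀ t ∈ Δ, μ (t ∩ A) = μ (interior t ∩ A) := fun t ht =>
      measure_eq_interior hnice (hΔ.tri t ht).convex A
    rw [Finset.sum_congr rfl h1]
    have h2 : μ (⋃ t ∈ Δ, interior t ∩ A) = ∑ t ∈ Δ, μ (interior t ∩ A) := by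
      apply measure_biUnion_finset
      · intro t ht s hs hts
        simp only [Function.onFun]
        rw [Set.disjoint_iff_inter_eq_empty]
        have := hΔ.disj t ht s hs hts
        rw [Set.inter_comm (interior t) A, Set.inter_assoc, ← Set.inter_assoc (interior t),
          this]
        simp
      · intro t ht
        exact (isOpen_interior.measurableSet).inter hA
    rw [← h2]
    exact measure_mono (by intro p hp; simp at hp; obtain ⟨t, _, _, hpA⟩ := hp; exact hpA)
  · -- ≥ : cover
    have : A = ⋃ t ∈ Δ, t ∩ A := by
      ext p
      simp only [Set.mem_iUnion, Set.mem_inter_iff]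
      constructor
      · intro hp
        have : p ∈ ⋃₀ (Δ : Set (Set (ℝ × ℝ))) := by rw [hΔ.cover]; trivial
        obtain ⟨t, ht, hpt⟩ := this
        exact ⟨t, ht, hpt, hp⟩
      · rintro ⟨t, _, _, hp⟩; exact hp
    conv_lhs => rw [this]
    exact measure_biUnion_finset_le _ _

lemma ent_zero : ent 0 = 0 := by simp [ent]

/-- superadditivity : ent of a sum is at most the sum of ents. -/
lemma ent_sum_le {α : Type*} {I : Finset α} {x : α → ℝ} (hx : ∀ i ∈ I, 0 ≤ x i) :
    ent (∑ i ∈ I, x i) ≤ ∑ i ∈ I, ent (x i) := by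
  set S := ∑ i ∈ I, x i with hSdef
  have hS : 0 ≤ S := Finset.sum_nonneg hx
  rcases eq_or_lt_of_le hS with h0 | hpos
  · have hall : ∀ i ∈ I, x i = 0 := (Finset.sum_eq_zero_iff_of_nonneg hx).1 h0.symm
    rw [← h0, ent_zero]
    apply Finset.sum_nonneg
    intro i hi; rw [hall i hi, ent_zero]
  · have : ent S = ∑ i ∈ I, x i * Real.logb 2 (1 / S) := by
      rw [ent, hSdef, Finset.sum_mul]
    rw [this]
    apply Finset.sum_le_sum
    intro i hi
    rcases eq_or_lt_of_le (hx i hi) with h0 | hp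
    · rw [← h0]; simp [ent]
    · rw [ent]
      have hxS : x i ≤ S := Finset.single_le_sum hx hi
      have h1 : (0:ℝ) < 1 / S := by positivity
      have h2 : 1 / S ≤ 1 / x i := by
        apply one_div_le_one_div_of_le hp hxS
      exact mul_le_mul_of_nonneg_left (Real.logb_le_logb_of_le one_lt_two h1 h2) (le_of_lt hp)

/-- entropy is at most log of the number of parts, relative form. -/
lemma sum_ent_le {α : Type*} {I : Finset α} {x : α → ℝ} (hx : ∀ i ∈ I, 0 ≤ x i) :
    ∑ i ∈ I, ent (x i) ≤ ent (∑ i ∈ I, x i)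
      + (∑ i ∈ I, x i) * Real.logb 2 (I.card) := by
  set S := ∑ i ∈ I, x i with hSdef
  have hS : 0 ≤ S := Finset.sum_nonneg hx
  rcases Finset.eq_empty_or_nonempty I with rfl | hne
  · simp [hSdef, ent_zero]
  have hn : (0:ℝ) < I.card := by exact_mod_cast Finset.card_pos.mpr hne
  rcases eq_or_lt_of_le hS with h0 | hpos
  · have hall : ∀ i ∈ I, x i = 0 := (Finset.sum_eq_zero_iff_of_nonneg hx).1 h0.symm
    have : ∑ i ∈ I, ent (x i) = 0 := by
      apply Finset.sum_eq_zero; intro i hi; rw [hall i hi, ent_zero]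
    rw [this, ← h0, ent_zero]
    simp
  · set n : ℝ := ((I.card : ℕ) : ℝ) with hndef
    have hlog2 : (0:ℝ) < Real.log 2 := Real.log_pos one_lt_two
    -- termwise bound
    have key : ∀ i ∈ I, ent (x i) ≤
        x i * Real.logb 2 (1 / S) + x i * Real.logb 2 n + (S / n - x i) / Real.log 2 := by
      intro i hi
      rcases eq_or_lt_of_le (hx i hi) with h0 | hp
      · rw [← h0, ent_zero]
        have h1 : (0:ℝ) ≤ S / n := le_of_lt (div_pos hpos hn)
        have : (0:ℝ) ≤ (S / n - 0) / Real.log 2 := by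
          apply div_nonneg _ (le_of_lt hlog2); linarith
        simpa using this
      · have hlog : Real.log (S / (x i * n)) ≤ S / (x i * n) - 1 :=
          Real.log_le_sub_one_of_pos (by positivity)
        have hexp : Real.log (S / (x i * n)) = Real.log S - Real.log (x i) - Real.log n := by
          rw [Real.log_div (ne_of_gt hpos) (by positivity), Real.log_mul (ne_of_gt hp) (ne_of_gt hn)]
          ring
        have hmul := mul_le_mul_of_nonneg_left hlog (le_of_lt hp)
        have hx1 : x i * (S / (x i * n) - 1) = S / n - x i := by
          field_simp
        rw [hexp, hx1] at hmul
        rw [ent, Real.logb, Real.logb, Real.logb, ← mul_div_assoc, ← mul_div_assoc,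
          ← mul_div_assoc, ← add_div, ← add_div, div_le_div_iff₀ hlog2 hlog2]
        have h1S : Real.log (1 / S) = - Real.log S := by
          rw [one_div, Real.log_inv]
        have h1x : Real.log (1 / x i) = - Real.log (x i) := by
          rw [one_div, Real.log_inv]
        rw [h1S, h1x]
        nlinarith [hmul, hlog2]
    calc ∑ i ∈ I, ent (x i)
        ≤ ∑ i ∈ I, (x i * Real.logb 2 (1 / S) + x i * Real.logb 2 n + (S / n - x i) / Real.log 2) :=
          Finset.sum_le_sum key
      _ = ent S + S * Real.logb 2 n := by
          rw [Finset.sum_add_distrib, Finset.sum_add_distrib, ← Finset.sum_mul, ← Finset.sum_mul,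
            ← hSdef, ent]
          have : ∑ i ∈ I, (S / n - x i) / Real.log 2 = 0 := by
            rw [← Finset.sum_div, Finset.sum_sub_distrib, ← hSdef, Finset.sum_const]
            field_simp
            rw [nsmul_eq_mul, ← hndef, mul_div_assoc', mul_div_cancel_left₀ _ hn.ne']; ring
          rw [this]; ring

theorem entropy_lower_bound_simple
    (μ : Measure (ℝ × ℝ)) [IsProbabilityMeasure μ]
    (hnice : μ ≪ volume)
    (Δ Δstar : Finset (Set (ℝ × ℝ)))
    (hΔ : IsTriangulation Δ) (hΔstar : IsTriangulation Δstar)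
    (c : ℝ) (hc : 1 ≤ c)
    (hcount : ∀ tstar ∈ Δstar,
      (({t | t ∈ Δ ∧ (interior t ∩ interior tstar).Nonempty} :
          Set (Set (ℝ × ℝ))).ncard : ℝ) ≤ c) :
    Hent μ Δ ≤ Hent μ Δstar + Real.logb 2 c := by
  classical
  have htoReal : ∀ (B : Finset (Set (ℝ × ℝ))), IsTriangulation B →
      ∀ (A : Set (ℝ × ℝ)), MeasurableSet A →
      ∑ t ∈ B, (μ (t ∩ A)).toReal = (μ A).toReal := by
    intro B hB A hA
    rw [← sum_inter hnice hB A hA, ENNReal.toReal_sum]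
    intro t _; exact measure_ne_top μ _
  have step1 : Hent μ Δ ≤ ∑ t ∈ Δ, ∑ ts ∈ Δstar, ent (μ (ts ∩ t)).toReal := by
    unfold Hent
    apply Finset.sum_le_sum
    intro t ht
    have h1 : (μ t).toReal = ∑ ts ∈ Δstar, (μ (ts ∩ t)).toReal :=
      (htoReal Δstar hΔstar t (hΔ.tri t ht).closed.measurableSet).symm
    rw [h1]
    exact ent_sum_le (fun ts _ => ENNReal.toReal_nonneg)
  have step2 : ∀ ts ∈ Δstar, ∑ t ∈ Δ, ent (μ (ts ∩ t)).toReal ≤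
      ent (μ ts).toReal + (μ ts).toReal * Real.logb 2 c := by
    intro ts hts
    set J := Δ.filter (fun t => (interior t ∩ interior ts).Nonempty) with hJ
    have hzero : ∀ t ∈ Δ, t ∉ J → μ (ts ∩ t) = 0 := by
      intro t ht htJ
      simp only [hJ, Finset.mem_filter, ht, true_and] at htJ
      apply null_of_empty_interior hnice
        (((hΔstar.tri ts hts).convex).inter ((hΔ.tri t ht).convex))
      rw [interior_inter]
      rw [Set.not_nonempty_iff_eq_empty] at htJ
      rw [Set.inter_comm, htJ]
    have hsum : ∑ t ∈ Δ, ent (μ (ts ∩ t)).toReal = ∑ t ∈ J, ent (μ (ts ∩ t)).toReal := by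
      symm
      apply Finset.sum_subset (Finset.filter_subset _ _)
      intro t ht htJ
      rw [hzero t ht htJ]
      simpa using ent_zero
    have hSJ : ∑ t ∈ J, (μ (ts ∩ t)).toReal = (μ ts).toReal := by
      rw [Finset.sum_subset (Finset.filter_subset _ _)
        (fun t ht htJ => by rw [hzero t ht htJ]; simp)]
      have := htoReal Δ hΔ ts (hΔstar.tri ts hts).closed.measurableSet
      simpa [Set.inter_comm] using this
    have hcard : (J.card : ℝ) ≤ c := by
      have h := hcount ts hts
      have heq : {t | t ∈ Δ ∧ (interior t ∩ interior ts).Nonempty} = (J : Set _) := by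
        ext t; simp [hJ]
      rw [heq, Set.ncard_coe_finset] at h
      exact h
    rw [hsum]
    calc ∑ t ∈ J, ent (μ (ts ∩ t)).toReal
        ≤ ent (∑ t ∈ J, (μ (ts ∩ t)).toReal)
          + (∑ t ∈ J, (μ (ts ∩ t)).toReal) * Real.logb 2 J.card :=
          sum_ent_le (fun _ _ => ENNReal.toReal_nonneg)
      _ ≤ ent (μ ts).toReal + (μ ts).toReal * Real.logb 2 c := by
          rw [hSJ]
          apply add_le_add le_rfl
          apply mul_le_mul_of_nonneg_left _ ENNReal.toReal_nonneg
          rcases Nat.eq_zero_or_pos J.card with h0 | hpos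
          · rw [h0]
            simpa using Real.logb_nonneg one_lt_two hc
          · exact Real.logb_le_logb_of_le one_lt_two (by exact_mod_cast hpos) hcard
  calc Hent μ Δ
      ≤ ∑ t ∈ Δ, ∑ ts ∈ Δstar, ent (μ (ts ∩ t)).toReal := step1
    _ = ∑ ts ∈ Δstar, ∑ t ∈ Δ, ent (μ (ts ∩ t)).toReal := Finset.sum_comm
    _ ≤ ∑ ts ∈ Δstar, (ent (μ ts).toReal + (μ ts).toReal * Real.logb 2 c) :=
        Finset.sum_le_sum step2
    _ = Hent μ Δstar + (∑ ts ∈ Δstar, (μ ts).toReal) * Real.logb 2 c := by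
        rw [Finset.sum_add_distrib, ← Finset.sum_mul]; rfl
    _ = Hent μ Δstar + Real.logb 2 c := by
        have h1 : ∑ ts ∈ Δstar, (μ ts).toReal = 1 := by
          have := htoReal Δstar hΔstar Set.univ MeasurableSet.univ
          simpa [measure_univ] using this
        rw [h1, one_mul]
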